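/- Every binary word s satisfies P(s) ≤ F_{|s|+3} − 1, where |s| is the length of s and F_m is the m-th Fibonacci number; consequently, a binary word with exactly n distinct subsequences has length Ω(log n). -/

import Mathlib

/-- `P s` is the number of distinct subsequences of the binary word `s`
(the letter `A` is `true`, the letter `B` is `false`), including the empty one. -/
def P (s : List Bool) : ℕ := s.sublists.toFinset.card

/-- `PA s` is the number of distinct subsequences of `s` starting with `A` (= `true`),
plus one for the empty subsequence. -/
def PA (s : List Bool) : ℕ :=
  ((s.sublists.toFinset).filter (fun t => t.head? = some true)).card + 1

/-- `PB s` is the number of distinct subsequences of `s` starting with `B` (= `false`),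
plus one for the empty subsequence. -/
def PB (s : List Bool) : ℕ :=
  ((s.sublists.toFinset).filter (fun t => t.head? = some false)).card + 1

/-- `QA s` is the number of distinct subsequences of `s` ending with `A` (= `true`),
plus one for the empty subsequence. -/
def QA (s : List Bool) : ℕ :=
  ((s.sublists.toFinset).filter (fun t => t.getLast? = some true)).card + 1

/-- `QB s` is the number of distinct subsequences of `s` ending with `B` (= `false`),
plus one for the empty subsequence. -/
def QB (s : List Bool) : ℕ :=
  ((s.sublists.toFinset).filter (fun t => t.getLast? = some false)).card + 1

/-- The word `gen a b`, defined by the Euclidean recursion: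
`gen 1 1 = []`, `gen a b = A ∘ gen (a-b) b` if `a > b`, `gen a b = B ∘ gen a (b-a)` if `b > a`. -/
def gen : ℕ → ℕ → List Bool
  | 0, _ => []
  | _ + 1, 0 => []
  | a + 1, b + 1 =>
    if a > b then true :: gen (a - b) (b + 1)
    else if b > a then false :: gen (a + 1) (b - a)
    else []
termination_by a b => a + b
decreasing_by all_goals omega

/-- `star s` swaps all letters `A` and `B` in `s`. -/
def star (s : List Bool) : List Bool := s.map (fun x => !x)

/-- `z n` is the alternating word `ABAB…` of length `n`. -/
def z : ℕ → List Bool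
  | 0 => []
  | n + 1 => true :: star (z n)


lemma PA_add_PB (s : List Bool) : PA s + PB s = P s + 1 := by
  unfold PA PB P
  have hnil : ([] : List Bool) ∈ s.sublists.toFinset := by simp
  set S := s.sublists.toFinset with hS
  have hsplit : S.filter (fun t => ¬ t.head? = some true)
      = insert ([] : List Bool) (S.filter (fun t => t.head? = some false)) := by
    ext t
    simp only [Finset.mem_filter, Finset.mem_insert]
    cases t with
    | nil => simp [hnil]
    | cons c r => cases c <;> simp
  have h := Finset.card_filter_add_card_filter_not
    (s := S) (p := fun t => t.head? = some true)
  rw [hsplit, Finset.card_insert_of_notMem (by simp)] at h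
  omega

lemma filter_head_cons_same (b : Bool) (s : List Bool) :
    ((b :: s).sublists.toFinset.filter (fun t => t.head? = some b))
      = s.sublists.toFinset.image (b :: ·) := by
  ext t
  simp only [Finset.mem_filter, Finset.mem_image, List.mem_toFinset, List.mem_sublists]
  constructor
  · rintro ⟨h1, h2⟩
    cases t with
    | nil => simp at h2
    | cons c r =>
      obtain rfl : c = b := by simpa using h2
      exact ⟨r, List.cons_sublist_cons.1 h1, rfl⟩
  · rintro ⟨r, hr, rfl⟩
    exact ⟨List.cons_sublist_cons.2 hr, rfl⟩

lemma filter_head_cons_ne (b : Bool) (s : List Bool) :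
    ((b :: s).sublists.toFinset.filter (fun t => t.head? = some (!b)))
      = s.sublists.toFinset.filter (fun t => t.head? = some (!b)) := by
  ext t
  simp only [Finset.mem_filter, List.mem_toFinset, List.mem_sublists]
  constructor
  · rintro ⟨h1, h2⟩
    refine ⟨?_, h2⟩
    cases h1 with
    | cons _ h => exact h
    | cons_cons _ h =>
      exfalso
      simp at h2
  · rintro ⟨h1, h2⟩
    exact ⟨List.Sublist.cons _ h1, h2⟩

lemma PA_true_cons (s : List Bool) : PA (true :: s) = P s + 1 := by
  unfold PA P
  rw [filter_head_cons_same, Finset.card_image_of_injective _ (List.cons_injective)]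

lemma PB_false_cons (s : List Bool) : PB (false :: s) = P s + 1 := by
  unfold PB P
  rw [filter_head_cons_same, Finset.card_image_of_injective _ (List.cons_injective)]

lemma PB_true_cons (s : List Bool) : PB (true :: s) = PB s := by
  unfold PB
  have := filter_head_cons_ne true s
  simp only [Bool.not_true] at this
  rw [this]

lemma PA_false_cons (s : List Bool) : PA (false :: s) = PA s := by
  unfold PA
  have := filter_head_cons_ne false s
  simp only [Bool.not_false] at this
  rw [this]

lemma key_fib (s : List Bool) :
    PA s ≤ Nat.fib (s.length + 2) ∧ PB s ≤ Nat.fib (s.length + 2) ∧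
      PA s + PB s ≤ Nat.fib (s.length + 3) := by
  induction s with
  | nil => refine ⟨?_, ?_, ?_⟩ <;> decide
  | cons b t ih =>
    obtain ⟨h1, h2, h3⟩ := ih
    have hP : PA t + PB t = P t + 1 := PA_add_PB t
    have hfib1 : Nat.fib (t.length + 2) ≤ Nat.fib (t.length + 3) :=
      Nat.fib_le_fib_succ
    have hfib2 : Nat.fib (t.length + 4) = Nat.fib (t.length + 2) + Nat.fib (t.length + 3) := by
      have h := Nat.fib_add_two (n := t.length + 2)
      simp only [show t.length + 2 + 2 = t.length + 4 from rfl,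
        show t.length + 2 + 1 = t.length + 3 from rfl] at h
      omega
    cases b <;>
      simp only [List.length_cons, show t.length + 1 + 2 = t.length + 3 from rfl,
        show t.length + 1 + 3 = t.length + 4 from rfl]
    · rw [PA_false_cons, PB_false_cons]
      omega
    · rw [PA_true_cons, PB_true_cons]
      omega

lemma P_pos (s : List Bool) : 1 ≤ P s := by
  unfold P
  have : ([] : List Bool) ∈ s.sublists.toFinset := by simp
  exact Finset.card_pos.2 ⟨_, this⟩

lemma P_le_pow (s : List Bool) : P s ≤ 2 ^ s.length := by
  calc P s ≤ s.sublists.length := s.sublists.toFinset_card_le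
    _ = 2 ^ s.length := List.length_sublists s

/-- Every binary word `s` satisfies `P(s) ≤ F_{|s|+3} - 1`; consequently a binary word with
exactly `n` subsequences has length `Ω(log n)`. -/
theorem P_le_fib_and_length_log :
    (∀ s : List Bool, P s ≤ Nat.fib (s.length + 3) - 1) ∧
    ∃ c : ℝ, 0 < c ∧ ∀ s : List Bool, c * Real.log (P s) ≤ (s.length : ℝ) := by
  constructor
  · intro s
    have h := (key_fib s).2.2
    have h2 := PA_add_PB s
    omega
  · refine ⟨1 / Real.log 2, by positivity, fun s => ?_⟩
    have hlog2 : 0 < Real.log 2 := Real.log_pos one_lt_two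
    have h1 : (P s : ℝ) ≤ 2 ^ s.length := by
      exact_mod_cast P_le_pow s
    have h0 : (1 : ℝ) ≤ (P s : ℝ) := by exact_mod_cast P_pos s
    have hlog : Real.log (P s) ≤ s.length * Real.log 2 := by
      calc Real.log (P s) ≤ Real.log (2 ^ s.length) :=
            Real.log_le_log (by linarith) h1
        _ = s.length * Real.log 2 := by rw [Real.log_pow]
    rw [div_mul_eq_mul_div, one_mul, div_le_iff₀ hlog2]
    calc Real.log (P s) ≤ s.length * Real.log 2 := hlog
      _ = (s.length : ℝ) * Real.log 2 := rfl
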